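/- Assume ℘ = ℘₁ : (mS)^∞, and let η be an integer such that for every μ ≥ η one has ℘ ∩ S_{[μ]} = ℘₁ ∩ S_{[μ]} (i.e., the m-torsion of the symmetric algebra S/℘₁ vanishes in all X-degrees ≥ η). Then the annihilator in R' of the R'-module S_{[η]}/(℘₁ ∩ S_{[η]}) equals ℘ ∩ R'. -/

import Mathlib

open MvPolynomial

set_option synthInstance.maxHeartbeats 1000000
set_option maxHeartbeats 1000000

/-- An element `F` of `S = R[T_0, …, T_n]` (with `R = k[X_1, …, X_n]`) is `X`-homogeneous of
degree `μ` if all of its coefficients (with respect to the `T`-monomials) are homogeneous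
polynomials of degree `μ` in the `X`-variables. -/
def XHomogeneous {k : Type*} [Field k] {n : ℕ} (μ : ℕ)
    (s : MvPolynomial (Fin (n + 1)) (MvPolynomial (Fin n) k)) : Prop :=
  ∀ e : (Fin (n + 1)) →₀ ℕ, (MvPolynomial.coeff e s).IsHomogeneous μ

/-- Suppose `℘` (the defining ideal of the Rees algebra of `I = (f_0, …, f_n)`) is the
`mS`-saturation of the linear syzygy ideal `℘₁`, and let `η` be such that `℘` and `℘₁`
agree in all `X`-degrees `μ ≥ η`.  Then the annihilator in `R' = k[T_0, …, T_n]` of the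
`R'`-module `S_{[η]}/(℘₁ ∩ S_{[η]})` is exactly `℘ ∩ R'`. -/
theorem annihilator_of_graded_piece_of_symmetric_algebra_eq_elimination_ideal
    {k : Type*} [Field k] (n : ℕ) (hn : 2 ≤ n) (d : ℕ) (hd : 1 ≤ d)
    (f : Fin (n + 1) → MvPolynomial (Fin n) k)
    (hf : ∀ i, (f i).IsHomogeneous d)
    (I : Ideal (MvPolynomial (Fin n) k))
    (hI : I = Ideal.span (Set.range f))
    (m : Ideal (MvPolynomial (Fin n) k))
    (hm : m = Ideal.span (Set.range (MvPolynomial.X : Fin n → MvPolynomial (Fin n) k)))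
    -- `℘` is the kernel of `S = R[T_0, …, T_n] → R[u]`, `T_i ↦ f_i u`:
    (P : Ideal (MvPolynomial (Fin (n + 1)) (MvPolynomial (Fin n) k)))
    (hP : P = RingHom.ker (MvPolynomial.aeval
        (fun i => Polynomial.C (f i) * Polynomial.X) :
        MvPolynomial (Fin (n + 1)) (MvPolynomial (Fin n) k)
          →ₐ[MvPolynomial (Fin n) k] Polynomial (MvPolynomial (Fin n) k)))
    -- `℘₁` is the ideal generated by the linear syzygies:
    (P₁ : Ideal (MvPolynomial (Fin (n + 1)) (MvPolynomial (Fin n) k)))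
    (hP₁ : P₁ = Ideal.span {p | ∃ a : Fin (n + 1) → MvPolynomial (Fin n) k,
        (∑ i, a i * f i = 0) ∧ p = ∑ i, MvPolynomial.C (a i) * MvPolynomial.X i})
    -- `℘ = ℘₁ : (mS)^∞`:
    (hsat : P = ⨆ j : ℕ, Submodule.colon P₁
      (((m.map (MvPolynomial.C :
        MvPolynomial (Fin n) k →+* MvPolynomial (Fin (n + 1)) (MvPolynomial (Fin n) k))) ^ j :
          Ideal (MvPolynomial (Fin (n + 1)) (MvPolynomial (Fin n) k))) :
          Set (MvPolynomial (Fin (n + 1)) (MvPolynomial (Fin n) k))))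
    (η : ℕ)
    -- `℘` and `℘₁` agree in every `X`-degree `μ ≥ η`:
    (hη : ∀ μ, η ≤ μ → ∀ s : MvPolynomial (Fin (n + 1)) (MvPolynomial (Fin n) k),
      XHomogeneous μ s → (s ∈ P ↔ s ∈ P₁)) :
    -- the annihilator of `S_{[η]}/(℘₁ ∩ S_{[η]})` in `R' = k[T_0, …, T_n]` equals `℘ ∩ R'`:
    {g : MvPolynomial (Fin (n + 1)) k |
        ∀ s : MvPolynomial (Fin (n + 1)) (MvPolynomial (Fin n) k), XHomogeneous η s →
          MvPolynomial.map (MvPolynomial.C : k →+* MvPolynomial (Fin n) k) g * s ∈ P₁} =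
      {g : MvPolynomial (Fin (n + 1)) k |
        MvPolynomial.map (MvPolynomial.C : k →+* MvPolynomial (Fin n) k) g ∈ P} := by
  classical
  ext g
  simp only [Set.mem_setOf_eq]
  set G := MvPolynomial.map (MvPolynomial.C : k →+* MvPolynomial (Fin n) k) g with hGdef
  constructor
  · intro hg
    -- Key: `G * C p ∈ P₁` for every homogeneous `p` of degree `≥ η`.
    have key : ∀ (t : ℕ) (p : MvPolynomial (Fin n) k), p.IsHomogeneous (η + t) →
        G * (MvPolynomial.C p :
          MvPolynomial (Fin (n + 1)) (MvPolynomial (Fin n) k)) ∈ P₁ := by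
      intro t
      induction t with
      | zero =>
        intro p hp
        apply hg
        intro e
        rw [MvPolynomial.coeff_C]
        split_ifs with h
        · simpa using hp
        · exact MvPolynomial.isHomogeneous_zero _ _ _
      | succ t ih =>
        intro p hp
        rw [MvPolynomial.as_sum p, map_sum, Finset.mul_sum]
        apply Ideal.sum_mem
        intro a ha
        have hcoeff : MvPolynomial.coeff a p ≠ 0 := MvPolynomial.mem_support_iff.mp ha
        have hdeg : a.degree = η + t + 1 := by
          rw [Finsupp.degree_eq_weight_one]
          exact hp hcoeff
        have hane : a ≠ 0 := by
          intro h
          rw [h, map_zero] at hdeg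
          omega
        obtain ⟨i, hi⟩ := Finsupp.ne_iff.mp hane
        have hile : Finsupp.single i 1 ≤ a :=
          Finsupp.single_le_iff.mpr (Nat.one_le_iff_ne_zero.mpr (by simpa using hi))
        set a' := a - Finsupp.single i 1 with ha'def
        have haeq : a' + Finsupp.single i 1 = a := tsub_add_cancel_of_le hile
        have hdegsingle : (Finsupp.single i 1 : Fin n →₀ ℕ).degree = 1 := by
          simp [Finsupp.degree_eq_weight_one, Finsupp.weight_apply, Finsupp.sum_single_index]
        have hdegadd : (a' + Finsupp.single i 1).degree = a'.degree + 1 := by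
          simp only [Finsupp.degree_eq_weight_one, map_add]
          rw [← Finsupp.degree_eq_weight_one] at *
          rw [hdegsingle]
        have hdeg' : a'.degree = η + t := by
          rw [haeq, hdeg] at hdegadd
          omega
        have hmono : (MvPolynomial.monomial a' (MvPolynomial.coeff a p)).IsHomogeneous (η + t) :=
          MvPolynomial.isHomogeneous_monomial _ hdeg'
        have h1 : (MvPolynomial.monomial a (MvPolynomial.coeff a p) : MvPolynomial (Fin n) k)
            = MvPolynomial.monomial a' (MvPolynomial.coeff a p) * MvPolynomial.X i := by
          rw [← haeq, MvPolynomial.monomial_add_single, pow_one]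
        rw [h1, map_mul]
        have hmem := ih _ hmono
        rw [show G * ((MvPolynomial.C (MvPolynomial.monomial a' (MvPolynomial.coeff a p)) :
              MvPolynomial (Fin (n + 1)) (MvPolynomial (Fin n) k)) *
              MvPolynomial.C (MvPolynomial.X i))
            = MvPolynomial.C (MvPolynomial.X i) *
              (G * MvPolynomial.C (MvPolynomial.monomial a' (MvPolynomial.coeff a p))) from by
          ring]
        exact Ideal.mul_mem_left _ _ hmem
    -- The ideal of elements `x` of `S` with `G * x ∈ P₁`, and its contraction to `R`.
    set QS : Ideal (MvPolynomial (Fin (n + 1)) (MvPolynomial (Fin n) k)) :=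
      Submodule.comap (LinearMap.mulLeft (MvPolynomial (Fin (n + 1)) (MvPolynomial (Fin n) k)) G)
        P₁ with hQSdef
    set Q' : Ideal (MvPolynomial (Fin n) k) :=
      Ideal.comap (MvPolynomial.C :
        MvPolynomial (Fin n) k →+* MvPolynomial (Fin (n + 1)) (MvPolynomial (Fin n) k)) QS
      with hQ'def
    have hQ'mem : ∀ x : MvPolynomial (Fin n) k, x ∈ Q' ↔
        G * (MvPolynomial.C x :
          MvPolynomial (Fin (n + 1)) (MvPolynomial (Fin n) k)) ∈ P₁ := fun x => Iff.rfl
    have hhom : ∀ (p : MvPolynomial (Fin n) k) (μ : ℕ), p.IsHomogeneous μ → η ≤ μ → p ∈ Q' := by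
      intro p μ hp hle
      rw [hQ'mem]
      exact key (μ - η) p (by rwa [Nat.add_sub_cancel' hle])
    have main : ∀ j : ℕ, ∀ x ∈ m ^ j, ∀ (p : MvPolynomial (Fin n) k) (μ : ℕ),
        p.IsHomogeneous μ → η ≤ μ + j → x * p ∈ Q' := by
      intro j
      induction j with
      | zero =>
        intro x _ p μ hp hle
        exact Ideal.mul_mem_left _ _ (hhom p μ hp (by omega))
      | succ j ih =>
        intro x hx
        rw [pow_succ] at hx
        refine Submodule.mul_induction_on hx ?_ ?_
        · intro y hy z hz
          rw [hm] at hz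
          refine Submodule.span_induction ?_ ?_ ?_ ?_ hz
          · rintro _ ⟨i, rfl⟩ p μ hp hle
            rw [show y * MvPolynomial.X i * p = y * (MvPolynomial.X i * p) from by ring]
            exact ih y hy _ (μ + 1)
              (by simpa [add_comm] using (MvPolynomial.isHomogeneous_X k i).mul hp) (by omega)
          · intro p μ hp hle
            simpa using Q'.zero_mem
          · intro z₁ z₂ hz₁ hz₂ h1 h2 p μ hp hle
            rw [show y * (z₁ + z₂) * p = y * z₁ * p + y * z₂ * p from by ring]
            exact Q'.add_mem (h1 p μ hp hle) (h2 p μ hp hle)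
          · intro r z hzmem hz p μ hp hle
            rw [smul_eq_mul, show y * (r * z) * p = r * (y * z * p) from by ring]
            exact Ideal.mul_mem_left _ _ (hz p μ hp hle)
        · intro x₁ x₂ h1 h2 p μ hp hle
          rw [add_mul]
          exact Q'.add_mem (h1 p μ hp hle) (h2 p μ hp hle)
    have hpow : m ^ η ≤ Q' := by
      intro x hx
      have := main η x hx 1 0 (MvPolynomial.isHomogeneous_one _ _) (by omega)
      simpa using this
    have hmaple : Ideal.map (MvPolynomial.C :
        MvPolynomial (Fin n) k →+* MvPolynomial (Fin (n + 1)) (MvPolynomial (Fin n) k))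
        (m ^ η) ≤ QS := Ideal.map_le_iff_le_comap.mpr hpow
    have hcolon : G ∈ Submodule.colon P₁
        (((m.map (MvPolynomial.C :
          MvPolynomial (Fin n) k →+* MvPolynomial (Fin (n + 1)) (MvPolynomial (Fin n) k))) ^ η :
            Ideal (MvPolynomial (Fin (n + 1)) (MvPolynomial (Fin n) k))) : Set (MvPolynomial (Fin (n + 1)) (MvPolynomial (Fin n) k))) := by
      rw [Submodule.mem_colon]
      intro x hx
      rw [smul_eq_mul]
      rw [← Ideal.map_pow] at hx
      exact hmaple hx
    rw [hsat]
    exact (le_iSup (fun j : ℕ => Submodule.colon P₁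
      (((m.map (MvPolynomial.C :
        MvPolynomial (Fin n) k →+* MvPolynomial (Fin (n + 1)) (MvPolynomial (Fin n) k))) ^ j :
          Ideal (MvPolynomial (Fin (n + 1)) (MvPolynomial (Fin n) k))) : Set (MvPolynomial (Fin (n + 1)) (MvPolynomial (Fin n) k)))) η)
      hcolon
  · intro hg s hs
    have hGs : XHomogeneous η (G * s) := by
      intro e
      rw [MvPolynomial.coeff_mul, ← MvPolynomial.mem_homogeneousSubmodule]
      apply Submodule.sum_mem
      rintro ⟨u, v⟩ huv
      rw [MvPolynomial.mem_homogeneousSubmodule]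
      have h1 : (MvPolynomial.coeff u G).IsHomogeneous 0 := by
        rw [hGdef, MvPolynomial.coeff_map]
        exact MvPolynomial.isHomogeneous_C _ _
      simpa using h1.mul (hs v)
    exact (hη η le_rfl _ hGs).mp (Ideal.mul_mem_right s P hg)
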